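/- Let H, M : [0,1] → ℝ satisfy assumptions (HM1)–(HM3), and fix an integer n ≥ 2. A pair (a,b) ∈ [0,1]² is called canonical if H'(a) = M'(b) and 2a + (n-1)b = 1. Then a canonical pair exists if and only if H'(1/2) ≤ M'(0), and if it exists, it is unique. -/
import Mathlib

open Set


/-- Under (HM1)-(HM3) and n ≥ 2, a canonical pair
(H'(a) = M'(b) and 2a + (n-1)b = 1, with a, b ∈ [0,1]) exists iff
H'(1/2) ≤ M'(0), and is unique when it exists. -/
theorem stmt5 (H M : ℝ → ℝ) (n : ℕ) (hn : 2 ≤ n)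
    (hHd : ∀ x ∈ Set.Icc (0:ℝ) 1, DifferentiableAt ℝ H x)
    (hHd2 : ∀ x ∈ Set.Icc (0:ℝ) 1, DifferentiableAt ℝ (deriv H) x)
    (hMd : ∀ x ∈ Set.Icc (0:ℝ) 1, DifferentiableAt ℝ M x)
    (hMd2 : ∀ x ∈ Set.Icc (0:ℝ) 1, DifferentiableAt ℝ (deriv M) x)
    (hH' : ∀ x ∈ Set.Ico (0:ℝ) 1, 0 < deriv H x)
    (hM' : ∀ x ∈ Set.Ico (0:ℝ) 1, 0 < deriv M x)
    (hH'' : ∀ x ∈ Set.Ico (0:ℝ) 1, deriv (deriv H) x < 0)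
    (hM'' : ∀ x ∈ Set.Ico (0:ℝ) 1, deriv (deriv M) x < 0)
    (hH0 : H 0 = 0) (hM0 : M 0 = 0)
    (hHM : ∀ x ∈ Set.Icc (0:ℝ) 1, M x ≤ H x) :
    ((∃ a b : ℝ, a ∈ Set.Icc (0:ℝ) 1 ∧ b ∈ Set.Icc (0:ℝ) 1 ∧
        deriv H a = deriv M b ∧ 2 * a + (n - 1 : ℝ) * b = 1) ↔
      deriv H (1/2) ≤ deriv M 0) ∧
    (∀ a b a' b' : ℝ,
      a ∈ Set.Icc (0:ℝ) 1 → b ∈ Set.Icc (0:ℝ) 1 →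
      a' ∈ Set.Icc (0:ℝ) 1 → b' ∈ Set.Icc (0:ℝ) 1 →
      deriv H a = deriv M b → 2 * a + (n - 1 : ℝ) * b = 1 →
      deriv H a' = deriv M b' → 2 * a' + (n - 1 : ℝ) * b' = 1 →
      a = a' ∧ b = b') := by
  have hn2 : (2:ℝ) ≤ (n:ℝ) := by exact_mod_cast hn
  set K : ℝ := (n - 1 : ℝ) with hKdef
  have hK1 : (1:ℝ) ≤ K := by simp only [hKdef]; linarith
  have hK0 : (0:ℝ) < K := by linarith
  have hKinv : 1 / K ≤ 1 := by rw [div_le_one hK0]; linarith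
  have hKinv0 : (0:ℝ) ≤ 1 / K := by positivity
  have hsubI : Icc (0:ℝ) (1/K) ⊆ Icc (0:ℝ) 1 := Icc_subset_Icc le_rfl hKinv
  clear_value K
  have h01 : (0:ℝ) ∈ Icc (0:ℝ) 1 := by norm_num
  have hhalf : (1/2 : ℝ) ∈ Icc (0:ℝ) 1 := by norm_num
  -- continuity of derivatives on [0,1]
  have hHc : ContinuousOn (deriv H) (Icc (0:ℝ) 1) := fun x hx =>
    (hHd2 x hx).continuousAt.continuousWithinAt
  have hMc : ContinuousOn (deriv M) (Icc (0:ℝ) 1) := fun x hx =>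
    (hMd2 x hx).continuousAt.continuousWithinAt
  -- strict antitonicity of derivatives
  have hHanti : StrictAntiOn (deriv H) (Icc (0:ℝ) 1) := by
    apply strictAntiOn_of_deriv_neg (convex_Icc 0 1) hHc
    intro x hx
    rw [interior_Icc] at hx
    exact hH'' x ⟨le_of_lt hx.1, hx.2⟩
  have hManti : StrictAntiOn (deriv M) (Icc (0:ℝ) 1) := by
    apply strictAntiOn_of_deriv_neg (convex_Icc 0 1) hMc
    intro x hx
    rw [interior_Icc] at hx
    exact hM'' x ⟨le_of_lt hx.1, hx.2⟩
  -- M'(0) ≤ H'(0)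
  have hB : deriv M 0 ≤ deriv H 0 := by
    have hg : HasDerivAt (fun x => H x - M x) (deriv H 0 - deriv M 0) 0 :=
      ((hHd 0 h01).hasDerivAt).sub ((hMd 0 h01).hasDerivAt)
    have hgw : HasDerivWithinAt (fun x => H x - M x) (deriv H 0 - deriv M 0) (Ioi 0) 0 :=
      hg.hasDerivWithinAt
    rw [hasDerivWithinAt_iff_tendsto_slope] at hgw
    have hsub : Ioi (0:ℝ) \ {0} = Ioi 0 := by
      ext x; simp only [mem_diff, mem_Ioi, mem_singleton_iff, and_iff_left_iff_imp]
      intro h; exact ne_of_gt h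
    rw [hsub] at hgw
    have hev : ∀ᶠ x in nhdsWithin (0:ℝ) (Ioi 0),
        0 ≤ slope (fun x => H x - M x) 0 x := by
      have h1 : ∀ᶠ x in nhdsWithin (0:ℝ) (Ioi 0), x < 1 :=
        eventually_nhdsWithin_of_eventually_nhds (eventually_lt_nhds (by norm_num))
      filter_upwards [self_mem_nhdsWithin, h1] with x hx hx1
      have hx0 : (0:ℝ) < x := hx
      have hHMx : M x ≤ H x := hHM x ⟨le_of_lt hx0, le_of_lt hx1⟩
      rw [slope_def_field]
      have : H 0 - M 0 = 0 := by rw [hH0, hM0]; ring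
      rw [div_nonneg_iff]
      left
      constructor
      · rw [this]; linarith
      · linarith
    have := ge_of_tendsto hgw hev
    linarith
  -- the key function
  set φ : ℝ → ℝ := fun b => (1 - K * b) / 2 with hφdef
  have hφmaps : ∀ b ∈ Icc (0:ℝ) (1/K), φ b ∈ Icc (0:ℝ) 1 := by
    intro b hb
    have h1 : K * b ≤ 1 := by
      have := hb.2
      rw [le_div_iff₀ hK0] at this
      linarith
    have h2 : 0 ≤ K * b := mul_nonneg (le_of_lt hK0) hb.1
    constructor
    · simp only [hφdef]; linarith
    · simp only [hφdef]; linarith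
  set f : ℝ → ℝ := fun b => deriv H (φ b) - deriv M b with hfdef
  have hfmono : StrictMonoOn f (Icc (0:ℝ) (1/K)) := by
    intro b hb b' hb' hlt
    have hφb := hφmaps b hb
    have hφb' := hφmaps b' hb'
    have h1 : φ b' < φ b := by
      simp only [hφdef]
      have : K * b < K * b' := by exact (mul_lt_mul_iff_right₀ hK0).mpr hlt
      linarith
    have h2 : deriv H (φ b) < deriv H (φ b') := hHanti hφb' hφb h1
    have h3 : deriv M b' < deriv M b := hManti (hsubI hb) (hsubI hb') hlt
    simp only [hfdef]
    linarith
  have hfc : ContinuousOn f (Icc (0:ℝ) (1/K)) := by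
    apply ContinuousOn.sub
    · exact hHc.comp (Continuous.continuousOn (by fun_prop)) hφmaps
    · exact hMc.mono hsubI
  have hφ0 : φ 0 = 1/2 := by simp [hφdef]
  have hφK : φ (1/K) = 0 := by
    simp only [hφdef]
    rw [mul_one_div, div_self (ne_of_gt hK0)]
    ring
  constructor
  · constructor
    · rintro ⟨a, b, ha, hb, heq, hsum⟩
      have hKb : 0 ≤ K * b := mul_nonneg (le_of_lt hK0) hb.1
      have ha2 : a ≤ 1/2 := by linarith
      have h1 : deriv H (1/2) ≤ deriv H a := by
        rcases eq_or_lt_of_le ha2 with h | h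
        · rw [h]
        · exact le_of_lt (hHanti ha hhalf h)
      have h2 : deriv M b ≤ deriv M 0 := by
        rcases eq_or_lt_of_le hb.1 with h | h
        · rw [← h]
        · exact le_of_lt (hManti h01 (hsubI ⟨hb.1, by
            rw [le_div_iff₀ hK0]
            have hc : b * K = K * b := mul_comm b K
            linarith [ha.1]⟩) h)
      linarith
    · intro hle
      have hf0 : f 0 ≤ 0 := by
        simp only [hfdef, hφ0]; linarith
      have hfK : 0 ≤ f (1/K) := by
        have hM1 : deriv M (1/K) ≤ deriv M 0 := by
          rcases eq_or_lt_of_le hKinv0 with h | h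
          · rw [← h]
          · exact le_of_lt (hManti h01 (hsubI ⟨hKinv0, le_rfl⟩) h)
        simp only [hfdef, hφK]
        linarith
      obtain ⟨b, hbmem, hfb⟩ := intermediate_value_Icc hKinv0 hfc ⟨hf0, hfK⟩
      refine ⟨φ b, b, hφmaps b hbmem, hsubI hbmem, ?_, ?_⟩
      · simp only [hfdef] at hfb; linarith
      · simp only [hφdef]; ring
  · intro a b a' b' ha hb ha' hb' he1 hs1 he2 hs2
    have hbmem : b ∈ Icc (0:ℝ) (1/K) := ⟨hb.1, by
      rw [le_div_iff₀ hK0]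
      have hc : b * K = K * b := mul_comm b K
      linarith [ha.1]⟩
    have hb'mem : b' ∈ Icc (0:ℝ) (1/K) := ⟨hb'.1, by
      rw [le_div_iff₀ hK0]
      have hc : b' * K = K * b' := mul_comm b' K
      linarith [ha'.1]⟩
    have haφ : a = φ b := by simp only [hφdef]; linarith
    have ha'φ : a' = φ b' := by simp only [hφdef]; linarith
    have hfb : f b = 0 := by simp only [hfdef, ← haφ]; linarith
    have hfb' : f b' = 0 := by simp only [hfdef, ← ha'φ]; linarith
    have hbb : b = b' := hfmono.injOn hbmem hb'mem (by rw [hfb, hfb'])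
    refine ⟨?_, hbb⟩
    rw [haφ, ha'φ, hbb]
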